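/- Let K be an algebraically closed field, r_i, s_i ∈ K× with r_i^2 ≠ s_i^2 for each i, and μ, ν ∈ (K×)^n with ν_i ≠ ±r_i s_i^{-1} μ_i for all i. On Z(μ,ν) = ⨁_{k ∈ ℤ^n} K z(k), define ρ_i z(k) = r_i^{k_i} μ_i z(k), σ_i z(k) = s_i^{k_i} ν_i z(k), x_i z(k) = z(k+ε_i), y_i z(k) = ((r_i^{2k_i}μ_i^2 − s_i^{2k_i}ν_i^2)/(r_i^2 − s_i^2)) z(k−ε_i). Then these operators satisfy the defining relations (R1)–(R5) of A_{r,s}(n), so Z(μ,ν) is an A_{r,s}(n)-module. -/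

import Mathlib

/-- Build a linear operator on `ι →₀ K` from its values on the basis. -/
noncomputable def mkOp {K : Type*} [Field K] {ι : Type*} (f : ι → (ι →₀ K)) :
    (ι →₀ K) →ₗ[K] (ι →₀ K) :=
  Finsupp.lsum K fun k => LinearMap.toSpanSingleton K (ι →₀ K) (f k)

section ops
variable {K : Type*} [Field K] {n : ℕ}

/-- `ρ_i z(k) = r_i^{k_i} μ_i z(k)` (and `σ_i` by substituting `s, ν`). -/
noncomputable def rhoZOp (r mu : Fin n → K) (i : Fin n) :
    ((Fin n → ℤ) →₀ K) →ₗ[K] ((Fin n → ℤ) →₀ K) :=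
  mkOp fun k => Finsupp.single k (r i ^ k i * mu i)

/-- inverse of `rhoZOp`. -/
noncomputable def rhoZInvOp (r mu : Fin n → K) (i : Fin n) :
    ((Fin n → ℤ) →₀ K) →ₗ[K] ((Fin n → ℤ) →₀ K) :=
  mkOp fun k => Finsupp.single k ((r i ^ k i * mu i)⁻¹)

/-- `x_i z(k) = z(k + ε_i)`. -/
noncomputable def xZOp (i : Fin n) :
    ((Fin n → ℤ) →₀ K) →ₗ[K] ((Fin n → ℤ) →₀ K) :=
  mkOp fun k => Finsupp.single (Function.update k i (k i + 1)) (1 : K)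

/-- `y_i z(k) = ((r_i^{2k_i}μ_i² - s_i^{2k_i}ν_i²)/(r_i² - s_i²)) z(k - ε_i)`. -/
noncomputable def yZOp (r s mu nu : Fin n → K) (i : Fin n) :
    ((Fin n → ℤ) →₀ K) →ₗ[K] ((Fin n → ℤ) →₀ K) :=
  mkOp fun k => ((r i ^ (2 * k i) * mu i ^ 2 - s i ^ (2 * k i) * nu i ^ 2) /
      (r i ^ 2 - s i ^ 2)) •
    Finsupp.single (Function.update k i (k i - 1)) (1 : K)

end ops

/- ### Auxiliary lemmas -/

lemma mkOp_single {K : Type*} [Field K] {ι : Type*} (f : ι → (ι →₀ K)) (k : ι) (c : K) :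
    mkOp f (Finsupp.single k c) = c • f k := by
  simp [mkOp, LinearMap.toSpanSingleton]

lemma mkOp_ext {K : Type*} [Field K] {ι : Type*} {F G : (ι →₀ K) →ₗ[K] (ι →₀ K)}
    (h : ∀ k : ι, F (Finsupp.single k 1) = G (Finsupp.single k 1)) : F = G := by
  apply Finsupp.lhom_ext'
  intro k
  apply LinearMap.ext_ring
  simpa using h k

section aux
variable {K : Type*} [Field K] {n : ℕ}

lemma rhoZOp_single (r mu : Fin n → K) (i : Fin n) (k : Fin n → ℤ) (c : K) :
    rhoZOp r mu i (Finsupp.single k c) = Finsupp.single k (c * (r i ^ k i * mu i)) := by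
  rw [rhoZOp, mkOp_single, Finsupp.smul_single, smul_eq_mul]

lemma rhoZInvOp_single (r mu : Fin n → K) (i : Fin n) (k : Fin n → ℤ) (c : K) :
    rhoZInvOp r mu i (Finsupp.single k c) = Finsupp.single k (c * (r i ^ k i * mu i)⁻¹) := by
  rw [rhoZInvOp, mkOp_single, Finsupp.smul_single, smul_eq_mul]

lemma xZOp_single (i : Fin n) (k : Fin n → ℤ) (c : K) :
    xZOp i (Finsupp.single k c) = Finsupp.single (Function.update k i (k i + 1)) c := by
  rw [xZOp, mkOp_single, Finsupp.smul_single, smul_eq_mul, mul_one]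

lemma yZOp_single (r s mu nu : Fin n → K) (i : Fin n) (k : Fin n → ℤ) (c : K) :
    yZOp r s mu nu i (Finsupp.single k c) =
      Finsupp.single (Function.update k i (k i - 1))
        (c * ((r i ^ (2 * k i) * mu i ^ 2 - s i ^ (2 * k i) * nu i ^ 2) /
          (r i ^ 2 - s i ^ 2))) := by
  rw [yZOp, mkOp_single, smul_smul, Finsupp.smul_single, smul_eq_mul, mul_one]

lemma rho_comm (a b c d : Fin n → K) (i j : Fin n) :
    rhoZOp (K := K) a b i ∘ₗ rhoZOp c d j = rhoZOp c d j ∘ₗ rhoZOp a b i := by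
  apply mkOp_ext; intro k
  simp only [LinearMap.comp_apply, rhoZOp_single]
  congr 1; ring

lemma rho_rhoInv (a b : Fin n → K) (i : Fin n) (ha : a i ≠ 0) (hb : b i ≠ 0) :
    rhoZOp (K := K) a b i ∘ₗ rhoZInvOp a b i = LinearMap.id := by
  apply mkOp_ext; intro k
  simp only [LinearMap.comp_apply, rhoZOp_single, rhoZInvOp_single, LinearMap.id_apply, one_mul]
  congr 1
  exact inv_mul_cancel₀ (mul_ne_zero (zpow_ne_zero _ ha) hb)

lemma rhoInv_rho (a b : Fin n → K) (i : Fin n) (ha : a i ≠ 0) (hb : b i ≠ 0) :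
    rhoZInvOp (K := K) a b i ∘ₗ rhoZOp a b i = LinearMap.id := by
  apply mkOp_ext; intro k
  simp only [LinearMap.comp_apply, rhoZOp_single, rhoZInvOp_single, LinearMap.id_apply, one_mul]
  congr 1
  exact mul_inv_cancel₀ (mul_ne_zero (zpow_ne_zero _ ha) hb)

lemma rho_x (a b : Fin n → K) (ha : ∀ i, a i ≠ 0) (i j : Fin n) :
    rhoZOp a b i ∘ₗ xZOp j = (if i = j then a i else 1) • (xZOp j ∘ₗ rhoZOp a b i) := by
  apply mkOp_ext; intro k
  simp only [LinearMap.comp_apply, LinearMap.smul_apply, rhoZOp_single, xZOp_single,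
    Finsupp.smul_single, smul_eq_mul, one_mul]
  by_cases h : i = j
  · subst h
    rw [Function.update_self, zpow_add_one₀ (ha i), if_pos rfl]
    congr 1; ring
  · rw [Function.update_of_ne h, if_neg h, one_mul]

lemma rho_y (r s mu nu a b : Fin n → K) (ha : ∀ i, a i ≠ 0) (i j : Fin n) :
    rhoZOp a b i ∘ₗ yZOp r s mu nu j
      = (if i = j then a i else 1)⁻¹ • (yZOp r s mu nu j ∘ₗ rhoZOp a b i) := by
  apply mkOp_ext; intro k
  simp only [LinearMap.comp_apply, LinearMap.smul_apply, rhoZOp_single, yZOp_single,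
    Finsupp.smul_single, smul_eq_mul, one_mul]
  by_cases h : i = j
  · subst h
    rw [Function.update_self, zpow_sub_one₀ (ha i), if_pos rfl]
    congr 1; field_simp
  · rw [Function.update_of_ne h, if_neg h, inv_one, one_mul]
    congr 1; ring

lemma x_x (i j : Fin n) : xZOp (K := K) (n := n) i ∘ₗ xZOp j = xZOp j ∘ₗ xZOp i := by
  apply mkOp_ext; intro k
  by_cases h : i = j
  · subst h; rfl
  · simp only [LinearMap.comp_apply, xZOp_single]
    rw [Function.update_of_ne h, Function.update_of_ne (Ne.symm h),
      Function.update_comm h]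

lemma y_y (r s mu nu : Fin n → K) (i j : Fin n) :
    yZOp r s mu nu i ∘ₗ yZOp r s mu nu j = yZOp r s mu nu j ∘ₗ yZOp r s mu nu i := by
  apply mkOp_ext; intro k
  by_cases h : i = j
  · subst h; rfl
  · simp only [LinearMap.comp_apply, yZOp_single]
    rw [Function.update_of_ne h, Function.update_of_ne (Ne.symm h),
      Function.update_comm h]
    congr 1; ring

lemma y_x (r s mu nu : Fin n → K) (i j : Fin n) (h : i ≠ j) :
    yZOp r s mu nu i ∘ₗ xZOp j = xZOp j ∘ₗ yZOp r s mu nu i := by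
  apply mkOp_ext; intro k
  simp only [LinearMap.comp_apply, yZOp_single, xZOp_single]
  rw [Function.update_of_ne h, Function.update_of_ne (Ne.symm h),
    Function.update_comm h]

lemma keyR5a (a b c d : K) (ha : a ≠ 0) (hb : b ≠ 0) (hab : a ^ 2 ≠ b ^ 2) (m : ℤ) :
    (a ^ (2 * (m + 1)) * c ^ 2 - b ^ (2 * (m + 1)) * d ^ 2) / (a ^ 2 - b ^ 2) -
      a ^ 2 * ((a ^ (2 * m) * c ^ 2 - b ^ (2 * m) * d ^ 2) / (a ^ 2 - b ^ 2)) =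
      (b ^ m * d) * (b ^ m * d) := by
  have hA : a ^ (2 * (m + 1)) = a ^ (2 * m) * a ^ (2 : ℕ) := by
    rw [mul_add, mul_one, zpow_add₀ ha, zpow_ofNat]
  have hB : b ^ (2 * (m + 1)) = b ^ (2 * m) * b ^ (2 : ℕ) := by
    rw [mul_add, mul_one, zpow_add₀ hb, zpow_ofNat]
  have hB2 : b ^ (2 * m) = (b ^ m) * (b ^ m) := by rw [two_mul, zpow_add₀ hb]
  have hden : a ^ 2 - b ^ 2 ≠ 0 := sub_ne_zero.2 hab
  rw [hA, hB, hB2]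
  field_simp
  ring

lemma keyR5b (a b c d : K) (ha : a ≠ 0) (hb : b ≠ 0) (hab : a ^ 2 ≠ b ^ 2) (m : ℤ) :
    (a ^ (2 * (m + 1)) * c ^ 2 - b ^ (2 * (m + 1)) * d ^ 2) / (a ^ 2 - b ^ 2) -
      b ^ 2 * ((a ^ (2 * m) * c ^ 2 - b ^ (2 * m) * d ^ 2) / (a ^ 2 - b ^ 2)) =
      (a ^ m * c) * (a ^ m * c) := by
  have hA : a ^ (2 * (m + 1)) = a ^ (2 * m) * a ^ (2 : ℕ) := by
    rw [mul_add, mul_one, zpow_add₀ ha, zpow_ofNat]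
  have hB : b ^ (2 * (m + 1)) = b ^ (2 * m) * b ^ (2 : ℕ) := by
    rw [mul_add, mul_one, zpow_add₀ hb, zpow_ofNat]
  have hA2 : a ^ (2 * m) = (a ^ m) * (a ^ m) := by rw [two_mul, zpow_add₀ ha]
  have hden : a ^ 2 - b ^ 2 ≠ 0 := sub_ne_zero.2 hab
  rw [hA, hB, hA2]
  field_simp
  ring

lemma R5a (r s mu nu : Fin n → K) (hr : ∀ i, r i ≠ 0) (hs : ∀ i, s i ≠ 0)
    (hrs : ∀ i, (r i) ^ 2 ≠ (s i) ^ 2) (i : Fin n) :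
    yZOp r s mu nu i ∘ₗ xZOp i - (r i) ^ 2 • (xZOp i ∘ₗ yZOp r s mu nu i)
      = rhoZOp s nu i ∘ₗ rhoZOp s nu i := by
  apply mkOp_ext; intro k
  simp only [LinearMap.sub_apply, LinearMap.comp_apply, LinearMap.smul_apply,
    yZOp_single, xZOp_single, rhoZOp_single, Finsupp.smul_single, smul_eq_mul, one_mul]
  rw [Function.update_self, Function.update_self, Function.update_idem,
    Function.update_idem, add_sub_cancel_right, sub_add_cancel,
    Function.update_eq_self, ← Finsupp.single_sub]
  congr 1
  exact keyR5a (r i) (s i) (mu i) (nu i) (hr i) (hs i) (hrs i) (k i)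

lemma R5b (r s mu nu : Fin n → K) (hr : ∀ i, r i ≠ 0) (hs : ∀ i, s i ≠ 0)
    (hrs : ∀ i, (r i) ^ 2 ≠ (s i) ^ 2) (i : Fin n) :
    yZOp r s mu nu i ∘ₗ xZOp i - (s i) ^ 2 • (xZOp i ∘ₗ yZOp r s mu nu i)
      = rhoZOp r mu i ∘ₗ rhoZOp r mu i := by
  apply mkOp_ext; intro k
  simp only [LinearMap.sub_apply, LinearMap.comp_apply, LinearMap.smul_apply,
    yZOp_single, xZOp_single, rhoZOp_single, Finsupp.smul_single, smul_eq_mul, one_mul]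
  rw [Function.update_self, Function.update_self, Function.update_idem,
    Function.update_idem, add_sub_cancel_right, sub_add_cancel,
    Function.update_eq_self, ← Finsupp.single_sub]
  congr 1
  exact keyR5b (r i) (s i) (mu i) (nu i) (hr i) (hs i) (hrs i) (k i)

end aux

/-- the operators defining `Z(μ,ν)` satisfy the defining relations
(R1)-(R5) of `A_{r,s}(n)`, so `Z(μ,ν)` is an `A_{r,s}(n)`-module. -/
theorem stmt10 {K : Type*} [Field K] [IsAlgClosed K] (n : ℕ)
    (r s mu nu : Fin n → K)
    (hr : ∀ i, r i ≠ 0) (hs : ∀ i, s i ≠ 0) (hrs : ∀ i, (r i) ^ 2 ≠ (s i) ^ 2)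
    (hmu : ∀ i, mu i ≠ 0) (hnu : ∀ i, nu i ≠ 0)
    (hbreak : ∀ i, nu i ≠ r i * (s i)⁻¹ * mu i ∧ nu i ≠ -(r i * (s i)⁻¹ * mu i)) :
    -- (R1)
    (∀ i j : Fin n,
        rhoZOp r mu i ∘ₗ rhoZOp r mu j = rhoZOp r mu j ∘ₗ rhoZOp r mu i ∧
        rhoZOp (K := K) r mu i ∘ₗ rhoZOp s nu j = rhoZOp s nu j ∘ₗ rhoZOp r mu i ∧
        rhoZOp (K := K) s nu i ∘ₗ rhoZOp s nu j = rhoZOp s nu j ∘ₗ rhoZOp s nu i) ∧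
    (∀ i : Fin n,
        rhoZOp (K := K) r mu i ∘ₗ rhoZInvOp r mu i = LinearMap.id ∧
        rhoZInvOp (K := K) r mu i ∘ₗ rhoZOp r mu i = LinearMap.id ∧
        rhoZOp (K := K) s nu i ∘ₗ rhoZInvOp s nu i = LinearMap.id ∧
        rhoZInvOp (K := K) s nu i ∘ₗ rhoZOp s nu i = LinearMap.id) ∧
    -- (R2)
    (∀ i j : Fin n,
        rhoZOp r mu i ∘ₗ xZOp j = (if i = j then r i else 1) • (xZOp j ∘ₗ rhoZOp r mu i) ∧
        rhoZOp r mu i ∘ₗ yZOp r s mu nu j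
          = (if i = j then r i else 1)⁻¹ • (yZOp r s mu nu j ∘ₗ rhoZOp r mu i)) ∧
    -- (R3)
    (∀ i j : Fin n,
        rhoZOp s nu i ∘ₗ xZOp j = (if i = j then s i else 1) • (xZOp j ∘ₗ rhoZOp s nu i) ∧
        rhoZOp s nu i ∘ₗ yZOp r s mu nu j
          = (if i = j then s i else 1)⁻¹ • (yZOp r s mu nu j ∘ₗ rhoZOp s nu i)) ∧
    -- (R4)
    (∀ i j : Fin n,
        xZOp (K := K) (n := n) i ∘ₗ xZOp j = xZOp j ∘ₗ xZOp i ∧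
        yZOp r s mu nu i ∘ₗ yZOp r s mu nu j = yZOp r s mu nu j ∘ₗ yZOp r s mu nu i) ∧
    (∀ i j : Fin n, i ≠ j → yZOp r s mu nu i ∘ₗ xZOp j = xZOp j ∘ₗ yZOp r s mu nu i) ∧
    -- (R5)
    (∀ i : Fin n,
        yZOp r s mu nu i ∘ₗ xZOp i - (r i) ^ 2 • (xZOp i ∘ₗ yZOp r s mu nu i)
          = rhoZOp s nu i ∘ₗ rhoZOp s nu i ∧
        yZOp r s mu nu i ∘ₗ xZOp i - (s i) ^ 2 • (xZOp i ∘ₗ yZOp r s mu nu i)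
          = rhoZOp r mu i ∘ₗ rhoZOp r mu i) := by
  refine ⟨fun i j => ⟨rho_comm r mu r mu i j, rho_comm r mu s nu i j, rho_comm s nu s nu i j⟩,
    fun i => ⟨rho_rhoInv r mu i (hr i) (hmu i), rhoInv_rho r mu i (hr i) (hmu i),
      rho_rhoInv s nu i (hs i) (hnu i), rhoInv_rho s nu i (hs i) (hnu i)⟩,
    fun i j => ⟨rho_x r mu hr i j, rho_y r s mu nu r mu hr i j⟩,
    fun i j => ⟨rho_x s nu hs i j, rho_y r s mu nu s nu hs i j⟩,
    fun i j => ⟨x_x i j, y_y r s mu nu i j⟩,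
    fun i j h => y_x r s mu nu i j h,
    fun i => ⟨R5a r s mu nu hr hs hrs i, R5b r s mu nu hr hs hrs i⟩⟩
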